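/- There is a constant C₃ > 1 such that the following holds. Suppose v ∈ ℝⁿ can be partitioned into S blocks v⁽¹⁾,...,v⁽ᔆ⁾ with ‖v⁽ˢ⁾‖₂ ≥ 4C₀²‖v⁽ˢ⁺¹⁾‖₂ for all s < S (where C₀ is the constant from the Paley–Zygmund claim), and let δ = ‖v⁽ᔆ⁾‖₂ ≥ 0 be the smallest scale. Then for every a ∈ ℝ and b ≥ 2, for uniformly random x ∈ {-1,1}ⁿ, Pr[|⟨x,v⟩ - a| < bδ] < C₃ exp(-S/C₃ + C₃ log b). -/

import Mathlib

open Finset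

def sgnB (b : Bool) : ℝ := if b then 1 else -1

lemma sgnB_not (b : Bool) : sgnB (!b) = - sgnB b := by cases b <;> simp [sgnB]

noncomputable def parSum {n : ℕ} (v : Fin n → ℝ) (w : Fin n → ℕ) (k : ℕ)
    (x : Fin n → Bool) : ℝ :=
  ∑ j ∈ Finset.univ.filter (fun j => w j ≤ k), sgnB (x j) * v j

noncomputable def blkSum {n : ℕ} (v : Fin n → ℝ) (w : Fin n → ℕ) (k : ℕ)
    (x : Fin n → Bool) : ℝ :=
  ∑ j ∈ Finset.univ.filter (fun j => w j = k), sgnB (x j) * v j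

noncomputable def blkNorm {n : ℕ} (v : Fin n → ℝ) (w : Fin n → ℕ) (k : ℕ) : ℝ :=
  Real.sqrt (∑ j ∈ Finset.univ.filter (fun j => w j = k), (v j)^2)

noncomputable def cntR {n : ℕ} (v : Fin n → ℝ) (w : Fin n → ℕ) (k : ℕ) (a r : ℝ) : ℝ :=
  ∑ x : Fin n → Bool, if |parSum v w k x - a| < r then (1:ℝ) else 0

section decomp
variable {n : ℕ} (v : Fin n → ℝ) (w : Fin n → ℕ) (k : ℕ)

/-- the equivalence splitting coordinates into block `k+1` and the rest -/
noncomputable def blkEquiv : (Fin n → Bool) ≃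
    (({j : Fin n // w j = k+1} → Bool) × ({j : Fin n // ¬ w j = k+1} → Bool)) :=
  Equiv.piEquivPiSubtypeProd (fun j => w j = k+1) (fun _ => Bool)

noncomputable def hY (y : {j : Fin n // w j = k+1} → Bool) : ℝ :=
  ∑ j, sgnB (y j) * v j.1

noncomputable def gZ (z : {j : Fin n // ¬ w j = k+1} → Bool) : ℝ :=
  ∑ j, if w j.1 ≤ k then sgnB (z j) * v j.1 else 0

lemma sum_decomp (F : (Fin n → Bool) → ℝ) :
    ∑ x, F x = ∑ y, ∑ z, F ((blkEquiv w k).symm (y, z)) := by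
  rw [← Equiv.sum_comp (blkEquiv w k).symm F, Fintype.sum_prod_type]

lemma blkE_pos (y z) (j : Fin n) (hj : w j = k+1) :
    ((blkEquiv w k).symm (y, z)) j = y ⟨j, hj⟩ := by
  simp [blkEquiv, Equiv.piEquivPiSubtypeProd_symm_apply, hj]

lemma blkE_neg (y z) (j : Fin n) (hj : ¬ w j = k+1) :
    ((blkEquiv w k).symm (y, z)) j = z ⟨j, hj⟩ := by
  simp [blkEquiv, Equiv.piEquivPiSubtypeProd_symm_apply, hj]

lemma blk_decomp (y z) : blkSum v w (k+1) ((blkEquiv w k).symm (y, z)) = hY v w k y := by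
  rw [blkSum, Finset.sum_subtype (p := fun j => w j = k+1) _ (by simp)]
  exact Finset.sum_congr rfl fun j _ => by rw [blkE_pos w k y z j.1 j.2]

lemma par_low (y z) : parSum v w k ((blkEquiv w k).symm (y, z)) = gZ v w k z := by
  rw [parSum, Finset.sum_filter]
  rw [← Equiv.sum_comp (Equiv.sumCompl (fun j => w j = k+1)), Fintype.sum_sum_type]
  have h1 : (∑ j : {j : Fin n // w j = k+1},
      (fun j : Fin n => if w j ≤ k then sgnB (((blkEquiv w k).symm (y, z)) j) * v j else 0)
        ((Equiv.sumCompl (fun j => w j = k+1)) (Sum.inl j))) = 0 := by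
    apply Finset.sum_eq_zero
    intro j _
    simp only [Equiv.sumCompl_apply_inl]
    exact if_neg (show ¬ w j.1 ≤ k by have := j.2; omega)
  rw [h1, zero_add, gZ]
  apply Finset.sum_congr rfl
  intro j _
  simp only [Equiv.sumCompl_apply_inr]
  rw [blkE_neg w k y z j.1 j.2]
  rfl

lemma par_decomp (y z) :
    parSum v w (k+1) ((blkEquiv w k).symm (y, z)) = gZ v w k z + hY v w k y := by
  have hsplit : parSum v w (k+1) ((blkEquiv w k).symm (y, z)) =
      parSum v w k ((blkEquiv w k).symm (y, z)) +
        blkSum v w (k+1) ((blkEquiv w k).symm (y, z)) := by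
    rw [parSum, parSum, blkSum, ← Finset.sum_union]
    · apply Finset.sum_congr _ (fun j _ => rfl)
      ext j
      simp only [Finset.mem_union, Finset.mem_filter, Finset.mem_univ, true_and]
      omega
    · rw [Finset.disjoint_left]
      intro j hj hj2
      simp only [Finset.mem_filter, Finset.mem_univ, true_and] at hj hj2
      omega
  rw [hsplit, par_low, blk_decomp]

/-- count factorization: counting a condition on the low part factors -/
lemma cnt_factor (c r' : ℝ) :
    cntR v w k c r' = (Fintype.card ({j : Fin n // w j = k+1} → Bool) : ℝ) *
      ∑ z, if |gZ v w k z - c| < r' then (1:ℝ) else 0 := by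
  rw [cntR, sum_decomp (w := w) (k := k)]
  rw [Finset.sum_congr rfl (fun y _ => Finset.sum_congr rfl (fun z _ => by
    rw [par_low]))]
  rw [Finset.sum_const, nsmul_eq_mul]
  simp

lemma hY_neg (y) : hY v w k (fun j => !(y j)) = - hY v w k y := by
  simp [hY, sgnB_not]

end decomp

lemma card_filter_real {α : Type*} [Fintype α] (P : α → Prop) [DecidablePred P] :
    (((Finset.univ.filter P).card : ℝ)) = ∑ x, if P x then (1:ℝ) else 0 := by
  rw [Finset.card_filter]
  push_cast
  exact Finset.sum_congr rfl (fun x _ => by split <;> simp)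

lemma cnt_le_total {n : ℕ} (v : Fin n → ℝ) (w : Fin n → ℕ) (k : ℕ) (a r : ℝ) :
    cntR v w k a r ≤ 2^n := by
  rw [cntR]
  calc ∑ x : Fin n → Bool, (if |parSum v w k x - a| < r then (1:ℝ) else 0)
      ≤ ∑ _x : Fin n → Bool, (1:ℝ) := by
        apply Finset.sum_le_sum; intro x _; split <;> norm_num
    _ = 2^n := by
        rw [Finset.sum_const, Finset.card_univ, Fintype.card_fun]
        simp

lemma cnt_nonneg {n : ℕ} (v : Fin n → ℝ) (w : Fin n → ℕ) (k : ℕ) (a r : ℝ) :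
    0 ≤ cntR v w k a r := by
  apply Finset.sum_nonneg; intro x _; split <;> norm_num

lemma pz_to_block (C₀ : ℝ) (hC₀ : 1 < C₀)
    (hPZ : ∀ (n : ℕ) (u : Fin n → ℝ), (∑ j, (u j) ^ 2) = 1 →
      (1 : ℝ) / C₀ ≤
        ((Finset.univ : Finset (Fin n → Bool)).filter (fun x =>
            1 / C₀ ≤ |∑ j, (if x j then (1 : ℝ) else -1) * u j| ∧
            |∑ j, (if x j then (1 : ℝ) else -1) * u j| ≤ C₀)).card / 2 ^ n)
    {n : ℕ} (v : Fin n → ℝ) (w : Fin n → ℕ) (k : ℕ) (hδ : 0 < blkNorm v w k) :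
    (2:ℝ)^n / C₀ ≤ ∑ x : Fin n → Bool,
      if blkNorm v w k / C₀ ≤ |blkSum v w k x| ∧ |blkSum v w k x| ≤ C₀ * blkNorm v w k
      then (1:ℝ) else 0 := by
  have hC0 : (0:ℝ) < C₀ := by linarith
  set δ := blkNorm v w k with hδdef
  have hsq : δ^2 = ∑ j ∈ Finset.univ.filter (fun j => w j = k), (v j)^2 :=
    Real.sq_sqrt (Finset.sum_nonneg fun j _ => sq_nonneg _)
  set u : Fin n → ℝ := fun j => (if w j = k then v j else 0)/δ with hu
  have hδne : δ ≠ 0 := ne_of_gt hδ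
  have hsum : ∑ j, u j ^ 2 = 1 := by
    rw [hu]
    simp only
    have h2 : ∀ j : Fin n, ((if w j = k then v j else 0)/δ)^2
        = (if w j = k then (v j)^2 else 0)/δ^2 := by
      intro j; split <;> simp [div_pow]
    rw [Finset.sum_congr rfl fun j _ => h2 j, ← Finset.sum_div, ← Finset.sum_filter, ← hsq]
    field_simp
  have key : ∀ x : Fin n → Bool,
      (∑ j, (if x j then (1:ℝ) else -1) * u j) = blkSum v w k x / δ := by
    intro x
    rw [blkSum, Finset.sum_filter, Finset.sum_div]
    apply Finset.sum_congr rfl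
    intro j _
    rw [hu]
    simp only [sgnB]
    split_ifs <;> ring
  have H := hPZ n u hsum
  rw [card_filter_real] at H
  have hiff : ∀ x : Fin n → Bool,
      ((1:ℝ)/C₀ ≤ |∑ j, (if x j then (1:ℝ) else -1) * u j| ∧
        |∑ j, (if x j then (1:ℝ) else -1) * u j| ≤ C₀)
      ↔ (δ/C₀ ≤ |blkSum v w k x| ∧ |blkSum v w k x| ≤ C₀ * δ) := by
    intro x
    rw [key x, abs_div, abs_of_pos hδ]
    constructor
    · rintro ⟨h1, h2⟩
      constructor
      · rw [div_le_iff₀ hC0]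
        rw [div_le_div_iff₀ hC0 hδ] at h1
        linarith
      · rw [div_le_iff₀ hδ] at h2
        linarith
    · rintro ⟨h1, h2⟩
      constructor
      · rw [div_le_div_iff₀ hC0 hδ]
        rw [div_le_iff₀ hC0] at h1
        linarith
      · rw [div_le_iff₀ hδ]
        linarith
  rw [Finset.sum_congr rfl fun x _ => if_congr (hiff x) rfl rfl] at H
  rw [div_le_iff₀ hC0]
  rw [div_le_div_iff₀ hC0 (by positivity : (0:ℝ) < 2^n)] at H
  linarith

lemma cy_pos {n : ℕ} (w : Fin n → ℕ) (k : ℕ) :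
    (0:ℝ) < (Fintype.card ({j : Fin n // w j = k+1} → Bool) : ℝ) := by
  exact_mod_cast Fintype.card_pos

lemma step_triv {n : ℕ} (v : Fin n → ℝ) (w : Fin n → ℕ) (k : ℕ)
    (D : ℝ) (a r : ℝ) (IH : ∀ c, cntR v w k c r ≤ D) :
    cntR v w (k+1) a r ≤ D := by
  have hcy := cy_pos w k
  set cy := (Fintype.card ({j : Fin n // w j = k+1} → Bool) : ℝ) with hcydef
  have hshift : ∀ y z, parSum v w (k+1) ((blkEquiv w k).symm (y, z)) - a
      = gZ v w k z - (a - hY v w k y) := by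
    intro y z; rw [par_decomp]; ring
  rw [cntR, sum_decomp (w := w) (k := k)]
  have hub : ∀ y, (∑ z, if |parSum v w (k+1) ((blkEquiv w k).symm (y, z)) - a| < r
      then (1:ℝ) else 0) ≤ D / cy := by
    intro y
    have h1 : (∑ z, if |parSum v w (k+1) ((blkEquiv w k).symm (y, z)) - a| < r
        then (1:ℝ) else 0) = cntR v w k (a - hY v w k y) r / cy := by
      rw [cnt_factor v w k (a - hY v w k y) r, mul_comm, mul_div_assoc,
        div_self (ne_of_gt hcy), mul_one]
      exact Finset.sum_congr rfl fun z _ => by rw [hshift]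
    rw [h1]
    exact div_le_div_of_nonneg_right (IH _) hcy.le
  calc (∑ y, ∑ z, if |parSum v w (k+1) ((blkEquiv w k).symm (y, z)) - a| < r
      then (1:ℝ) else 0) ≤ ∑ _y : {j : Fin n // w j = k+1} → Bool, D / cy :=
        Finset.sum_le_sum fun y _ => hub y
    _ = D := by
        rw [Finset.sum_const, Finset.card_univ, nsmul_eq_mul, ← hcydef,
          mul_div_cancel₀ _ (ne_of_gt hcy)]

lemma step_contract (C₀ : ℝ) (hC₀ : 1 < C₀) {n : ℕ} (v : Fin n → ℝ) (w : Fin n → ℕ)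
    (k : ℕ)
    (hgood : (2:ℝ)^n / C₀ ≤ ∑ x : Fin n → Bool,
      if blkNorm v w (k+1) / C₀ ≤ |blkSum v w (k+1) x| ∧
          |blkSum v w (k+1) x| ≤ C₀ * blkNorm v w (k+1) then (1:ℝ) else 0)
    (hdec : blkNorm v w k ≥ 4*C₀^2 * blkNorm v w (k+1))
    (hδ : 0 < blkNorm v w (k+1))
    (D : ℝ) (hD : 0 ≤ D)
    (IH : ∀ c r', 0 ≤ r' → r' ≤ blkNorm v w k / (2*C₀) → cntR v w k c r' ≤ D)
    (a r : ℝ) (hr : 0 ≤ r) (hrb : r ≤ blkNorm v w (k+1) / (2*C₀)) :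
    cntR v w (k+1) a r ≤ (1 - 1/(2*C₀)) * D := by
  have hC0 : (0:ℝ) < C₀ := by linarith
  have hcy := cy_pos w k
  set cy := (Fintype.card ({j : Fin n // w j = k+1} → Bool) : ℝ) with hcydef
  have hcz : (0:ℝ) < (Fintype.card ({j : Fin n // ¬ w j = k+1} → Bool) : ℝ) := by
    exact_mod_cast Fintype.card_pos
  set cz := (Fintype.card ({j : Fin n // ¬ w j = k+1} → Bool) : ℝ) with hczdef
  set δ' := blkNorm v w (k+1) with hδ'def
  have hcycz : cy * cz = 2^n := by
    have h1 := Fintype.card_congr (blkEquiv (n := n) w k)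
    rw [Fintype.card_prod, Fintype.card_fun, Fintype.card_fin, Fintype.card_bool] at h1
    rw [hcydef, hczdef]
    exact_mod_cast h1.symm
  set T : ℝ → ℝ → ℝ := fun c r' => ∑ z, if |gZ v w k z - c| < r' then (1:ℝ) else 0
    with hTdef
  have hT : ∀ c r', 0 ≤ r' → r' ≤ blkNorm v w k / (2*C₀) → T c r' ≤ D / cy := by
    intro c r' h1 h2
    have h4 := IH c r' h1 h2
    rw [cnt_factor v w k c r', ← hcydef] at h4
    show (∑ z, if |gZ v w k z - c| < r' then (1:ℝ) else 0) ≤ D / cy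
    rw [le_div_iff₀ hcy, mul_comm]
    exact h4
  have hrk : r ≤ blkNorm v w k / (2*C₀) := by
    apply hrb.trans
    apply div_le_div_of_nonneg_right _ (by positivity)
    have h41 : (1:ℝ) ≤ 4*C₀^2 := by nlinarith
    nlinarith [mul_le_mul_of_nonneg_right h41 hδ.le]
  have hr2 : r * (2*C₀) ≤ δ' := (le_div_iff₀ (by positivity)).mp hrb
  have hrbig : r + C₀ * δ' ≤ blkNorm v w k / (2*C₀) := by
    rw [le_div_iff₀ (by positivity)]
    have h21 : (0:ℝ) ≤ 2*C₀^2 - 1 := by nlinarith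
    nlinarith [mul_nonneg hδ.le h21, hr2, hdec]
  -- good y count
  have hGY : cy / C₀ ≤ ∑ y, (if δ'/C₀ ≤ |hY v w k y| ∧ |hY v w k y| ≤ C₀*δ'
      then (1:ℝ) else 0) := by
    have h1 : (∑ x : Fin n → Bool, if δ'/C₀ ≤ |blkSum v w (k+1) x| ∧
          |blkSum v w (k+1) x| ≤ C₀*δ' then (1:ℝ) else 0)
        = ∑ y, ∑ _z : {j : Fin n // ¬ w j = k+1} → Bool,
            (if δ'/C₀ ≤ |hY v w k y| ∧ |hY v w k y| ≤ C₀*δ' then (1:ℝ) else 0) := by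
      rw [sum_decomp (w := w) (k := k)]
      exact Finset.sum_congr rfl fun y _ => Finset.sum_congr rfl fun z _ => by
        rw [blk_decomp]
    have h2 : ∀ y, (∑ _z : {j : Fin n // ¬ w j = k+1} → Bool,
          (if δ'/C₀ ≤ |hY v w k y| ∧ |hY v w k y| ≤ C₀*δ' then (1:ℝ) else 0))
        = cz * (if δ'/C₀ ≤ |hY v w k y| ∧ |hY v w k y| ≤ C₀*δ' then (1:ℝ) else 0) := by
      intro y
      rw [Finset.sum_const, Finset.card_univ, nsmul_eq_mul, ← hczdef]
    rw [h1, Finset.sum_congr rfl (fun y _ => h2 y), ← Finset.mul_sum] at hgood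
    have h3 : cz * (cy / C₀) ≤ cz * ∑ y, (if δ'/C₀ ≤ |hY v w k y| ∧
        |hY v w k y| ≤ C₀*δ' then (1:ℝ) else 0) := by
      calc cz * (cy / C₀) = cy * cz / C₀ := by ring
        _ = 2^n / C₀ := by rw [hcycz]
        _ ≤ _ := hgood
    exact le_of_mul_le_mul_left h3 hcz
  -- pairing
  have hflip : ∀ (F : ({j : Fin n // w j = k+1} → Bool) → ℝ),
      ∑ y, F y = ∑ y : {j : Fin n // w j = k+1} → Bool, F (fun j => !(y j)) := by
    intro F
    have hinv : Function.Involutive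
        (fun (y : {j : Fin n // w j = k+1} → Bool) => (fun j => !(y j))) := by
      intro y; funext j; simp
    exact (Equiv.sum_comp hinv.toPerm F).symm
  have hA : cntR v w (k+1) a r = ∑ y, T (a - hY v w k y) r := by
    rw [cntR, sum_decomp (w := w) (k := k)]
    refine Finset.sum_congr rfl fun y _ => ?_
    show _ = ∑ z, if |gZ v w k z - (a - hY v w k y)| < r then (1:ℝ) else 0
    refine Finset.sum_congr rfl fun z _ => ?_
    have he : parSum v w (k+1) ((blkEquiv w k).symm (y, z)) - a
        = gZ v w k z - (a - hY v w k y) := by rw [par_decomp]; ring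
    rw [he]
  have hB : cntR v w (k+1) a r = ∑ y, T (a + hY v w k y) r := by
    rw [hA, hflip (fun y => T (a - hY v w k y) r)]
    refine Finset.sum_congr rfl fun y _ => ?_
    rw [hY_neg, sub_neg_eq_add]
  have hpair : 2 * cntR v w (k+1) a r
      = ∑ y, (T (a - hY v w k y) r + T (a + hY v w k y) r) := by
    rw [two_mul]
    nth_rewrite 1 [hA]
    rw [hB, ← Finset.sum_add_distrib]
  -- per-y bound
  have hDcy : (0:ℝ) ≤ D / cy := by positivity
  have hpery : ∀ y, T (a - hY v w k y) r + T (a + hY v w k y) r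
      ≤ 2 * (D/cy) - (D/cy) * (if δ'/C₀ ≤ |hY v w k y| ∧ |hY v w k y| ≤ C₀*δ'
          then (1:ℝ) else 0) := by
    intro y
    by_cases hg : δ'/C₀ ≤ |hY v w k y| ∧ |hY v w k y| ≤ C₀*δ'
    · rw [if_pos hg]
      have hcomb : T (a - hY v w k y) r + T (a + hY v w k y) r ≤ T a (r + C₀*δ') := by
        show (∑ z, if |gZ v w k z - (a - hY v w k y)| < r then (1:ℝ) else 0)
            + (∑ z, if |gZ v w k z - (a + hY v w k y)| < r then (1:ℝ) else 0)
            ≤ ∑ z, if |gZ v w k z - a| < r + C₀*δ' then (1:ℝ) else 0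
        rw [← Finset.sum_add_distrib]
        apply Finset.sum_le_sum
        intro z _
        have e3 := abs_le.mp hg.2
        by_cases h1 : |gZ v w k z - (a - hY v w k y)| < r
        · by_cases h2 : |gZ v w k z - (a + hY v w k y)| < r
          · exfalso
            rw [abs_lt] at h1 h2
            have habs : |hY v w k y| < r := abs_lt.mpr ⟨by linarith, by linarith⟩
            have e1 : δ' ≤ |hY v w k y| * C₀ := (div_le_iff₀ hC0).mp hg.1
            linarith [mul_lt_mul_of_pos_right habs hC0, mul_nonneg hr hC0.le]
          · rw [if_pos h1, if_neg h2, if_pos]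
            · norm_num
            · rw [abs_lt] at h1 ⊢
              constructor <;> linarith [h1.1, h1.2, e3.1, e3.2]
        · by_cases h2 : |gZ v w k z - (a + hY v w k y)| < r
          · rw [if_neg h1, if_pos h2, if_pos]
            · norm_num
            · rw [abs_lt] at h2 ⊢
              constructor <;> linarith [h2.1, h2.2, e3.1, e3.2]
          · rw [if_neg h1, if_neg h2]
            split <;> norm_num
      have hub := hT a (r + C₀*δ') (by positivity) hrbig
      linarith
    · rw [if_neg hg]
      have t1 := hT (a - hY v w k y) r hr hrk
      have t2 := hT (a + hY v w k y) r hr hrk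
      linarith
  -- assemble
  have hfinal : 2 * cntR v w (k+1) a r ≤ 2*D - D/C₀ := by
    rw [hpair]
    calc (∑ y, (T (a - hY v w k y) r + T (a + hY v w k y) r))
        ≤ ∑ y, (2 * (D/cy) - (D/cy) * (if δ'/C₀ ≤ |hY v w k y| ∧
            |hY v w k y| ≤ C₀*δ' then (1:ℝ) else 0)) :=
          Finset.sum_le_sum fun y _ => hpery y
      _ = cy * (2 * (D/cy)) - (D/cy) * ∑ y, (if δ'/C₀ ≤ |hY v w k y| ∧
            |hY v w k y| ≤ C₀*δ' then (1:ℝ) else 0) := by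
          rw [Finset.sum_sub_distrib, Finset.sum_const, Finset.card_univ,
            nsmul_eq_mul, ← Finset.mul_sum, ← hcydef]
      _ ≤ cy * (2 * (D/cy)) - (D/cy) * (cy / C₀) := by
          have := mul_le_mul_of_nonneg_left hGY hDcy
          linarith
      _ = 2*D - D/C₀ := by
          field_simp
  have h2 : (1 - 1/(2*C₀)) * D = (2*D - D/C₀)/2 := by
    field_simp
  rw [h2]
  linarith

lemma blk_chain {n : ℕ} (v : Fin n → ℝ) (w : Fin n → ℕ) (S : ℕ) (C₀ : ℝ) (hC₀ : 1 < C₀)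
    (hdec : ∀ k, k + 1 < S → blkNorm v w k ≥ 4*C₀^2 * blkNorm v w (k+1)) :
    ∀ d, d ≤ S - 1 → blkNorm v w (S-1-d) ≥ (4*C₀^2)^d * blkNorm v w (S-1) := by
  intro d
  induction d with
  | zero => intro _; simp
  | succ d ih =>
    intro hd
    have h1 := ih (by omega)
    have h3 := hdec (S-1-(d+1)) (by omega)
    rw [show S-1-(d+1)+1 = S-1-d from by omega] at h3
    calc blkNorm v w (S-1-(d+1)) ≥ 4*C₀^2 * blkNorm v w (S-1-d) := h3
      _ ≥ 4*C₀^2 * ((4*C₀^2)^d * blkNorm v w (S-1)) := by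
          apply mul_le_mul_of_nonneg_left h1 (by positivity)
      _ = (4*C₀^2)^(d+1) * blkNorm v w (S-1) := by ring

lemma main_ind (C₀ : ℝ) (hC₀ : 1 < C₀) {n : ℕ} (v : Fin n → ℝ) (w : Fin n → ℕ) (S : ℕ)
    (hdec : ∀ k, k+1 < S → blkNorm v w k ≥ 4*C₀^2*blkNorm v w (k+1))
    (hpos : ∀ k, k < S → 0 < blkNorm v w k)
    (hgood : ∀ k, k < S → (2:ℝ)^n / C₀ ≤ ∑ x : Fin n → Bool,
      if blkNorm v w k / C₀ ≤ |blkSum v w k x| ∧ |blkSum v w k x| ≤ C₀ * blkNorm v w k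
      then (1:ℝ) else 0) :
    ∀ k, k < S → ∀ a r, 0 ≤ r → r ≤ blkNorm v w k / (2*C₀) →
      cntR v w k a r ≤ (1 - 1/(2*C₀))^k * 2^n := by
  have hC0 : (0:ℝ) < C₀ := by linarith
  have hu : (0:ℝ) ≤ 1 - 1/(2*C₀) := by
    rw [sub_nonneg, div_le_one (by positivity)]
    linarith
  intro k
  induction k with
  | zero =>
    intro _ a r _ _
    simpa using cnt_le_total v w 0 a r
  | succ k ih =>
    intro hk a r hr hrb
    have hkS : k < S := by omega
    have h := step_contract C₀ hC₀ v w k (hgood (k+1) hk) (hdec k hk) (hpos (k+1) hk)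
      ((1 - 1/(2*C₀))^k * 2^n)
      (mul_nonneg (pow_nonneg hu k) (by positivity))
      (fun c r' h1 h2 => ih hkS c r' h1 h2) a r hr hrb
    calc cntR v w (k+1) a r ≤ (1 - 1/(2*C₀)) * ((1 - 1/(2*C₀))^k * 2^n) := h
      _ = (1 - 1/(2*C₀))^(k+1) * 2^n := by ring

lemma tail_ind {n : ℕ} (v : Fin n → ℝ) (w : Fin n → ℕ) (K : ℕ) (r D : ℝ)
    (hbase : ∀ a, cntR v w K a r ≤ D) :
    ∀ m, K ≤ m → ∀ a, cntR v w m a r ≤ D := by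
  intro m
  induction m with
  | zero => intro h a; rw [Nat.le_zero] at h; subst h; exact hbase a
  | succ m ih =>
    intro hm a
    by_cases hK : K = m+1
    · subst hK; exact hbase a
    · exact step_triv v w m D a r (fun c => ih (by omega) c)

set_option maxHeartbeats 1000000 in
theorem many_scales_anticoncentration
    (C₀ : ℝ) (hC₀ : 1 < C₀)
    (hPZ : ∀ (n : ℕ) (u : Fin n → ℝ), (∑ j, (u j) ^ 2) = 1 →
      (1 : ℝ) / C₀ ≤
        ((Finset.univ : Finset (Fin n → Bool)).filter (fun x =>
            1 / C₀ ≤ |∑ j, (if x j then (1 : ℝ) else -1) * u j| ∧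
            |∑ j, (if x j then (1 : ℝ) else -1) * u j| ≤ C₀)).card / 2 ^ n) :
    ∃ C₃ : ℝ, 1 < C₃ ∧
      ∀ (n S : ℕ) (hS : 0 < S) (v : Fin n → ℝ) (π : Fin n → Fin S),
        (∀ s : Fin S, (s : ℕ) + 1 < S →
          Real.sqrt (∑ j ∈ Finset.univ.filter (fun j => π j = s), (v j) ^ 2) ≥
            4 * C₀ ^ 2 *
              Real.sqrt (∑ j ∈ Finset.univ.filter (fun j => (π j : ℕ) = (s : ℕ) + 1),
                (v j) ^ 2)) →
        ∀ (a b : ℝ), 2 ≤ b →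
          (((Finset.univ : Finset (Fin n → Bool)).filter (fun x =>
              |(∑ j, (if x j then (1 : ℝ) else -1) * v j) - a| <
                b * Real.sqrt (∑ j ∈ Finset.univ.filter
                  (fun j => (π j : ℕ) = S - 1), (v j) ^ 2))).card / 2 ^ n : ℝ) <
            C₃ * Real.exp (-(S : ℝ) / C₃ + C₃ * Real.log b) := by
  have hC0 : (0:ℝ) < C₀ := by linarith
  refine ⟨41*C₀, by linarith, ?_⟩
  intro n S hS v π hdec' a b hb
  set C₃ : ℝ := 41*C₀ with hC₃def
  have hC₃pos : (0:ℝ) < C₃ := by positivity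
  have hb0 : (0:ℝ) < b := by linarith
  have hlogb : 0 < Real.log b := Real.log_pos (by linarith)
  set w : Fin n → ℕ := fun j => (π j : ℕ) with hw
  set δ : ℝ := Real.sqrt (∑ j ∈ Finset.univ.filter
      (fun j => (π j : ℕ) = S - 1), (v j)^2) with hδdef
  have hδblk : δ = blkNorm v w (S-1) := rfl
  have hδnn : 0 ≤ δ := Real.sqrt_nonneg _
  have h2n : (0:ℝ) < 2^n := by positivity
  have hexp : 0 < Real.exp (-(S : ℝ) / C₃ + C₃ * Real.log b) := Real.exp_pos _
  -- the count identity
  have hpar : ∀ x : Fin n → Bool,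
      parSum v w (S-1) x = ∑ j, (if x j then (1:ℝ) else -1) * v j := by
    intro x
    rw [parSum, Finset.filter_true_of_mem (fun j _ => Nat.le_sub_one_of_lt (π j).isLt)]
    exact Finset.sum_congr rfl fun j _ => rfl
  have hcount : (((Finset.univ : Finset (Fin n → Bool)).filter (fun x =>
        |(∑ j, (if x j then (1 : ℝ) else -1) * v j) - a| <
          b * Real.sqrt (∑ j ∈ Finset.univ.filter
            (fun j => (π j : ℕ) = S - 1), (v j) ^ 2))).card : ℝ)
      = cntR v w (S-1) a (b*δ) := by
    rw [card_filter_real, cntR]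
    exact Finset.sum_congr rfl fun x _ => if_congr (by rw [hpar x]) rfl rfl
  rw [hcount]
  -- decay in blk form
  have hdec : ∀ k, k+1 < S → blkNorm v w k ≥ 4*C₀^2*blkNorm v w (k+1) := by
    intro k hk
    have h := hdec' ⟨k, by omega⟩ (by simpa using hk)
    have hfil1 : (Finset.univ.filter (fun j => π j = (⟨k, by omega⟩ : Fin S)))
        = (Finset.univ.filter (fun j => w j = k)) := by
      apply Finset.filter_congr
      intro j _
      simp [hw, Fin.ext_iff]
    have hfil2 : (Finset.univ.filter (fun j => (π j : ℕ) = ((⟨k, by omega⟩ : Fin S) : ℕ) + 1))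
        = (Finset.univ.filter (fun j => w j = k + 1)) := by
      apply Finset.filter_congr
      intro j _
      simp [hw]
    rw [hfil1, hfil2] at h
    exact h
  by_cases hδ0 : δ ≤ 0
  · -- degenerate: δ = 0
    have hδz : δ = 0 := le_antisymm hδ0 hδnn
    have hzero : cntR v w (S-1) a (b*δ) = 0 := by
      rw [cntR]
      apply Finset.sum_eq_zero
      intro x _
      rw [if_neg]
      rw [hδz, mul_zero]
      exact fun hcon => absurd hcon (not_lt.mpr (abs_nonneg _))
    rw [hzero, zero_div]
    positivity
  · push_neg at hδ0
    have hpos : ∀ k, k < S → 0 < blkNorm v w k := by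
      intro k hk
      have hch := blk_chain v w S C₀ hC₀ hdec (S-1-k) (by omega)
      rw [show S-1-(S-1-k) = k from by omega] at hch
      have h1 : 0 < (4*C₀^2)^(S-1-k) * blkNorm v w (S-1) := by
        rw [← hδblk]
        positivity
      linarith
    have hgood : ∀ k, k < S → (2:ℝ)^n / C₀ ≤ ∑ x : Fin n → Bool,
        if blkNorm v w k / C₀ ≤ |blkSum v w k x| ∧ |blkSum v w k x| ≤ C₀ * blkNorm v w k
        then (1:ℝ) else 0 := fun k hk => pz_to_block C₀ hC₀ hPZ v w k (hpos k hk)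
    -- choice of M
    set M : ℕ := ⌈Real.log (2*C₀*b) / Real.log 4⌉₊ with hMdef
    have hlog4 : (1:ℝ) ≤ Real.log 4 := by
      rw [Real.le_log_iff_exp_le (by norm_num)]
      calc Real.exp 1 ≤ 2.7182818286 := Real.exp_one_lt_d9.le
        _ ≤ 4 := by norm_num
    have hlog4pos : (0:ℝ) < Real.log 4 := by linarith
    have h2Cb : (0:ℝ) < 2*C₀*b := by positivity
    have hMb : 2*C₀*b ≤ (4*C₀^2)^M := by
      have h1 : Real.log (2*C₀*b) ≤ (M:ℝ) * Real.log 4 := by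
        have h2 := Nat.le_ceil (Real.log (2*C₀*b) / Real.log 4)
        rw [div_le_iff₀ hlog4pos] at h2
        exact_mod_cast h2
      have h3 : 2*C₀*b ≤ (4:ℝ)^M := by
        calc 2*C₀*b = Real.exp (Real.log (2*C₀*b)) := (Real.exp_log h2Cb).symm
          _ ≤ Real.exp ((M:ℝ) * Real.log 4) := Real.exp_le_exp.mpr h1
          _ = (4:ℝ)^M := by
              rw [← Real.log_pow, Real.exp_log (by positivity)]
      calc 2*C₀*b ≤ (4:ℝ)^M := h3
        _ ≤ (4*C₀^2)^M := by
            apply pow_le_pow_left₀ (by norm_num)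
            nlinarith
    have hlog2C : Real.log (2*C₀) ≤ 2*C₀ - 1 := Real.log_le_sub_one_of_pos (by positivity)
    have hMub : (M:ℝ) ≤ Real.log (2*C₀) + Real.log b + 1 := by
      have h1 : Real.log (2*C₀*b) / Real.log 4 ≤ Real.log (2*C₀*b) := by
        apply div_le_self _ hlog4
        apply Real.log_nonneg
        nlinarith
      have h2 : (M:ℝ) < Real.log (2*C₀*b) / Real.log 4 + 1 :=
        Nat.ceil_lt_add_one (by
          apply div_nonneg _ hlog4pos.le
          apply Real.log_nonneg
          nlinarith)
      have h3 : Real.log (2*C₀*b) = Real.log (2*C₀) + Real.log b := by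
        rw [Real.log_mul (by positivity) (by positivity)]
      nlinarith
    by_cases hSM : S ≤ M
    · -- trivial regime
      have hlhs : cntR v w (S-1) a (b*δ) / 2^n ≤ 1 := by
        rw [div_le_one h2n]
        exact cnt_le_total v w (S-1) a (b*δ)
      have hrhs : (1:ℝ) < C₃ * Real.exp (-(S : ℝ) / C₃ + C₃ * Real.log b) := by
        have hE : 0 ≤ -(S : ℝ) / C₃ + C₃ * Real.log b := by
          have hScast : (S:ℝ) ≤ (M:ℝ) := by exact_mod_cast hSM
          have hS3 : (S:ℝ) ≤ 2*C₀ + Real.log b := by nlinarith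
          rw [hC₃def]
          have hlog2 : (0.6931471803 : ℝ) < Real.log b := by
            calc (0.6931471803 : ℝ) < Real.log 2 := Real.log_two_gt_d9
              _ ≤ Real.log b := Real.log_le_log (by norm_num) hb
          have hgoal : (S:ℝ)/(41*C₀) ≤ (41*C₀) * Real.log b := by
            rw [div_le_iff₀ (by positivity)]
            have hsq : C₀ ≤ C₀^2 := by nlinarith
            nlinarith [hS3, hsq, hlog2,
              mul_nonneg (by nlinarith : (0:ℝ) ≤ 1681*C₀^2 - 1) hlogb.le,
              mul_le_mul_of_nonneg_left hlog2.le (by positivity : (0:ℝ) ≤ 1681*C₀^2)]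
          rw [neg_div, ← sub_nonneg]
          linarith
        calc (1:ℝ) < C₃ := by rw [hC₃def]; linarith
          _ = C₃ * 1 := (mul_one _).symm
          _ ≤ C₃ * Real.exp (-(S : ℝ) / C₃ + C₃ * Real.log b) := by
              apply mul_le_mul_of_nonneg_left _ hC₃pos.le
              rw [← Real.exp_zero]
              exact Real.exp_le_exp.mpr hE
      linarith
    · -- main regime
      push_neg at hSM
      set K : ℕ := S - 1 - M with hKdef
      have hKS : K < S := by omega
      have hbK : b*δ ≤ blkNorm v w K / (2*C₀) := by
        have hch := blk_chain v w S C₀ hC₀ hdec M (by omega)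
        rw [show S-1-M = K from rfl, ← hδblk] at hch
        rw [le_div_iff₀ (by positivity)]
        have h1 : (2*C₀*b) * δ ≤ (4*C₀^2)^M * δ :=
          mul_le_mul_of_nonneg_right hMb hδnn
        nlinarith
      have hbase := main_ind C₀ hC₀ v w S hdec hpos hgood K hKS
      have htail := tail_ind v w K (b*δ) ((1 - 1/(2*C₀))^K * 2^n)
        (fun c => hbase c (b*δ) (by positivity) hbK) (S-1) (by omega) a
      -- numeric finish
      have hup : (0:ℝ) < 1 - 1/(2*C₀) := by
        rw [sub_pos, div_lt_one (by positivity)]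
        linarith
      have hlogu : Real.log (1 - 1/(2*C₀)) ≤ -(1/(2*C₀)) := by
        have := Real.log_le_sub_one_of_pos hup
        linarith
      have hKcast : (K:ℝ) = (S:ℝ) - (M:ℝ) - 1 := by
        have hh : K + (M+1) = S := by omega
        have := congrArg (Nat.cast : ℕ → ℝ) hh
        push_cast at this
        linarith
      have hpowK : (1 - 1/(2*C₀))^K = Real.exp ((K:ℝ) * Real.log (1 - 1/(2*C₀))) := by
        rw [← Real.log_pow, Real.exp_log (by positivity)]
      have hexplt : (K:ℝ) * Real.log (1 - 1/(2*C₀)) <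
          Real.log C₃ + (-(S : ℝ) / C₃ + C₃ * Real.log b) := by
        have h1 : (K:ℝ) * Real.log (1 - 1/(2*C₀)) ≤ (K:ℝ) * (-(1/(2*C₀))) :=
          mul_le_mul_of_nonneg_left hlogu (by positivity)
        have h2 : (K:ℝ) * (-(1/(2*C₀))) = -(S:ℝ)/(2*C₀) + ((M:ℝ)+1)/(2*C₀) := by
          rw [hKcast]; ring
        have h3 : -(S:ℝ)/(2*C₀) ≤ -(S:ℝ)/C₃ := by
          rw [hC₃def, neg_div, neg_div, neg_le_neg_iff]
          apply div_le_div_of_nonneg_left (by positivity) (by positivity) (by linarith)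
        have h4 : ((M:ℝ)+1)/(2*C₀) ≤ 2 + Real.log b := by
          rw [div_le_iff₀ (by positivity)]
          nlinarith
        have h5 : (3:ℝ) < Real.log C₃ := by
          rw [hC₃def, Real.lt_log_iff_exp_lt (by positivity)]
          have he3 : Real.exp 3 = (Real.exp 1)^(3:ℕ) := by
            rw [Real.exp_one_pow]; norm_num
          have h2' : (Real.exp 1)^(3:ℕ) < 2.7182818286^(3:ℕ) :=
            pow_lt_pow_left₀ Real.exp_one_lt_d9 (Real.exp_pos 1).le (by norm_num)
          have h3' : (2.7182818286:ℝ)^(3:ℕ) < 41 := by norm_num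
          nlinarith
        have h6 : Real.log b ≤ C₃ * Real.log b := by
          nlinarith [hlogb, hC₃pos]
        linarith
      calc cntR v w (S-1) a (b*δ) / 2^n ≤ (1 - 1/(2*C₀))^K := by
            rw [div_le_iff₀ h2n]; exact htail
        _ = Real.exp ((K:ℝ) * Real.log (1 - 1/(2*C₀))) := hpowK
        _ < Real.exp (Real.log C₃ + (-(S : ℝ) / C₃ + C₃ * Real.log b)) :=
            Real.exp_lt_exp.mpr hexplt
        _ = C₃ * Real.exp (-(S : ℝ) / C₃ + C₃ * Real.log b) := by
            rw [Real.exp_add, Real.exp_log hC₃pos]
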